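/- For real numbers p = 2r-2, q = 2s-2 with integers r,s ≥ 2, and α = (p+q+2)/2, and any θ ∈ (0, π/2), if Σ = p+q ≥ 18 then 4α²·η₁(θ) > 0, where η₁(θ) = (2·1-1) - 2(1/α)²[(2·1-1)pq + p + q] + (1/α)²[((2·1-1)q² - 2q)cot²θ + ((2·1-1)p² - 2p)tan²θ], i.e. η₁(θ) = 1 - (2/α²)(p+q+pq) + (1/α²)[(q²-2q)cot²θ + (p²-2p)tan²θ]. -/

import Mathlib

open Real

set_option maxHeartbeats 1000000 in
lemma disc (p q : ℝ) (hp : 4 ≤ p) (hq : 4 ≤ q) (hsum : 18 ≤ p + q)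
    (hD : 0 ≤ 8*p*q + 8*(p+q) - (p+q+2)^2) :
    (8*p*q + 8*(p+q) - (p+q+2)^2)^2 < 64 * (p*(p-2)) * (q*(q-2)) := by
  nlinarith [sq_nonneg (p-q), sq_nonneg (p+q-18),
    mul_pos (by linarith : (0:ℝ) < p-2) (by linarith : (0:ℝ) < q-2),
    sq_nonneg (p*q - p - q),
    mul_nonneg (by linarith : (0:ℝ) ≤ p-4) (by linarith : (0:ℝ) ≤ q-4)]

lemma key (p q u v : ℝ) (hp2 : p = 2 ∨ 4 ≤ p) (hq2 : q = 2 ∨ 4 ≤ q)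
    (hsum : 18 ≤ p + q) (hu : 0 < u) (hv : 0 < v) (huv : u * v = 1) :
    0 < (p+q+2)^2 - 8*(p+q+p*q) + 4*((q^2-2*q)*u^2 + (p^2-2*p)*v^2) := by
  rcases hp2 with hp2 | hp2
  · -- p = 2
    subst hp2
    have hq16 : 16 ≤ q := by linarith
    have hu2 : 0 < u^2 := by positivity
    nlinarith [mul_pos (mul_pos (by linarith : (0:ℝ) < q) (by linarith : (0:ℝ) < q - 2)) hu2, sq_nonneg (q - 16)]
  rcases hq2 with hq2 | hq2
  · subst hq2
    have hp16 : 16 ≤ p := by linarith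
    have hv2 : 0 < v^2 := by positivity
    nlinarith [mul_pos (mul_pos (by linarith : (0:ℝ) < p) (by linarith : (0:ℝ) < p - 2)) hv2, sq_nonneg (p - 16)]
  · -- p, q ≥ 4
    set A : ℝ := q^2 - 2*q with hA
    set B : ℝ := p^2 - 2*p with hB
    have hApos : 0 < A := by nlinarith
    have hBpos : 0 < B := by nlinarith
    set a := Real.sqrt A
    set b := Real.sqrt B
    have ha2 : a^2 = A := Real.sq_sqrt hApos.le
    have hb2 : b^2 = B := Real.sq_sqrt hBpos.le
    have hapos : 0 < a := Real.sqrt_pos.mpr hApos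
    have hbpos : 0 < b := Real.sqrt_pos.mpr hBpos
    have hamgm : 2 * (a*b) ≤ A * u^2 + B * v^2 := by
      nlinarith [sq_nonneg (a*u - b*v), sq_nonneg u, sq_nonneg v, mul_pos hapos hbpos]
    have hC : 0 < (p+q+2)^2 - 8*(p+q+p*q) + 8 * (a*b) := by
      by_cases hD : 8*p*q + 8*(p+q) - (p+q+2)^2 ≤ 0
      · nlinarith [mul_pos hapos hbpos]
      · push_neg at hD
        have hDsq := disc p q hp2 hq2 hsum hD.le
        have hab2 : (a*b)^2 = A * B := by rw [mul_pow, ha2, hb2]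
        have habpos : 0 < a * b := mul_pos hapos hbpos
        have h1 : (8*p*q + 8*(p+q) - (p+q+2)^2)^2 < (8*(a*b))^2 := by
          have : (8*(a*b))^2 = 64 * (p*(p-2)) * (q*(q-2)) := by
            rw [mul_pow, hab2, hA, hB]; ring
          linarith [hDsq, this]
        have h2 : 8*p*q + 8*(p+q) - (p+q+2)^2 < 8*(a*b) :=
          lt_of_pow_lt_pow_left₀ 2 (by positivity) h1
        linarith
    linarith [hamgm, hC]

theorem stmt0 (r s : ℤ) (hr : 2 ≤ r) (hs : 2 ≤ s)
    (p q α : ℝ) (hp : p = 2 * (r : ℝ) - 2) (hq : q = 2 * (s : ℝ) - 2)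
    (hα : α = (p + q + 2) / 2)
    (θ : ℝ) (hθ : θ ∈ Set.Ioo 0 (π / 2))
    (hsum : 18 ≤ p + q) :
    0 < 4 * α ^ 2 *
      (1 - (2 / α ^ 2) * (p + q + p * q) +
        (1 / α ^ 2) * ((q ^ 2 - 2 * q) * (cos θ / sin θ) ^ 2 +
          (p ^ 2 - 2 * p) * (sin θ / cos θ) ^ 2)) := by
  obtain ⟨hθ0, hθ1⟩ := hθ
  have hsin : 0 < Real.sin θ := Real.sin_pos_of_pos_of_lt_pi hθ0 (by linarith [Real.pi_pos])
  have hcos : 0 < Real.cos θ := Real.cos_pos_of_mem_Ioo ⟨by linarith [Real.pi_pos], hθ1⟩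
  have hαpos : 0 < α := by rw [hα]; linarith
  set u := Real.cos θ / Real.sin θ with hu
  set v := Real.sin θ / Real.cos θ with hv
  have hupos : 0 < u := by positivity
  have hvpos : 0 < v := by positivity
  have huv : u * v = 1 := by
    rw [hu, hv, div_mul_div_comm, mul_comm (cos θ), div_self (mul_pos hsin hcos).ne']
  have hp2 : p = 2 ∨ 4 ≤ p := by
    rcases eq_or_lt_of_le hr with h | h
    · left; rw [hp, ← h]; norm_num
    · right; rw [hp]
      have : (3 : ℝ) ≤ (r : ℝ) := by exact_mod_cast h
      linarith
  have hq2 : q = 2 ∨ 4 ≤ q := by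
    rcases eq_or_lt_of_le hs with h | h
    · left; rw [hq, ← h]; norm_num
    · right; rw [hq]
      have : (3 : ℝ) ≤ (s : ℝ) := by exact_mod_cast h
      linarith
  have hkey := key p q u v hp2 hq2 hsum hupos hvpos huv
  have hαne : α ≠ 0 := ne_of_gt hαpos
  have heq : 4 * α ^ 2 *
      (1 - (2 / α ^ 2) * (p + q + p * q) +
        (1 / α ^ 2) * ((q ^ 2 - 2 * q) * u ^ 2 + (p ^ 2 - 2 * p) * v ^ 2))
      = (p+q+2)^2 - 8*(p+q+p*q) + 4*((q^2-2*q)*u^2 + (p^2-2*p)*v^2) := by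
    field_simp [hα]
    rw [hα]; ring
  rw [heq]
  exact hkey
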